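/- Let 𝒳 = {a} be a one-letter alphabet, let ā(1) be the single-node tree a and ā(m) = a(ā(m−1)) the chain tree with m nodes. Let c be a cost function over 𝒳 that is a metric (non-negative, self-equal, discernible, symmetric, and satisfying the triangular inequality) and let m ∈ ℕ be even. Then the number of co-optimal tree mappings between x̄ = ā(m) and ȳ = ā(m/2) is exactly m! / ((m/2)!)² = C(m, m/2). -/
import Mathlib


namespace TED

/-- A tree over an alphabet `α`: a label together with a (possibly empty) list of children. -/
inductive PTree (α : Type) where
  | node : α → List (PTree α) → PTree α

/-- A forest over `α` is a finite list of trees; `[]` is the empty forest `ε`. -/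
abbrev Forest (α : Type) := List (PTree α)

namespace PTree

/-- The label of (the root of) a tree. -/
def label {α : Type} : PTree α → α
  | node a _ => a

/-- The children of (the root of) a tree. -/
def children {α : Type} : PTree α → List (PTree α)
  | node _ cs => cs

mutual
  /-- The number of nodes of a tree. -/
  def size {α : Type} : PTree α → ℕ
    | node _ cs => 1 + sizeL cs
  /-- The number of nodes of a forest. -/
  def sizeL {α : Type} : List (PTree α) → ℕ
    | [] => 0
    | t :: ts => size t + sizeL ts
end

mutual
  /-- The pre-order list of all subtrees of a tree. -/
  def subtreesT {α : Type} : PTree α → List (PTree α)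
    | node a cs => node a cs :: subtreesL cs
  /-- The pre-order list of all subtrees of a forest. -/
  def subtreesL {α : Type} : List (PTree α) → List (PTree α)
    | [] => []
    | t :: ts => subtreesT t ++ subtreesL ts
end

end PTree

open PTree

/-- The pre-order `π(X)` of a forest: the list of all its subtrees. -/
def preorder {α : Type} (F : Forest α) : List (PTree α) := PTree.subtreesL F

/-- The size `|X|` of a forest: the length of its pre-order. -/
def fsize {α : Type} (F : Forest α) : ℕ := (preorder F).length

/-- The `i`-th subtree `x̄_i` (1-indexed pre-order) of a forest, if it exists. -/
def treeAt {α : Type} (F : Forest α) (i : ℕ) : Option (PTree α) := (preorder F)[i - 1]?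

/-- The label `x_i` of the `i`-th subtree, as an element of `𝒳 ∪ {−}`
(`none` plays the role of the gap symbol `−`). -/
def labelAt {α : Type} (F : Forest α) (i : ℕ) : Option α := (treeAt F i).map PTree.label

/-- The number of nodes of the `i`-th subtree `x̄_i`. -/
def sizeAt {α : Type} (F : Forest α) (i : ℕ) : ℕ := ((treeAt F i).map PTree.size).getD 0

/-- A cost function over `α`: a real-valued function on `(𝒳 ∪ {−}) × (𝒳 ∪ {−})`,
where the gap symbol `−` is modelled by `none`. -/
abbrev Cost (α : Type) := Option α → Option α → ℝ

/-- `c` is non-negative. -/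
def Nonneg {α : Type} (c : Cost α) : Prop := ∀ x y, 0 ≤ c x y
/-- `c` is self-equal. -/
def SelfEq {α : Type} (c : Cost α) : Prop := ∀ x, c x x = 0
/-- `c` is discernible. -/
def Discernible {α : Type} (c : Cost α) : Prop := ∀ x y, x ≠ y → 0 < c x y
/-- `c` is symmetric. -/
def Symm {α : Type} (c : Cost α) : Prop := ∀ x y, c x y = c y x
/-- `c` conforms to the triangular inequality. -/
def Triangle {α : Type} (c : Cost α) : Prop := ∀ x y z, c x z ≤ c x y + c y z

/-- `x̄_k` is a (proper) ancestor of `x̄_i`, expressed via 1-indexed pre-order indices: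
the descendants of `x̄_k` occupy exactly the pre-order indices `k+1, …, k + |x̄_k| - 1`. -/
def AncestorIdx {α : Type} (F : Forest α) (k i : ℕ) : Prop :=
  k < i ∧ i < k + sizeAt F k

/-- A tree mapping between two forests: a set `M ⊆ {1,…,|F|} × {1,…,|G|}` such that
for all `(i,j), (i',j') ∈ M` we have `i = i' ↔ j = j'`, `i ≤ i' ↔ j ≤ j'`, and
`x̄_i` is an ancestor of `x̄_{i'}` iff `ȳ_j` is an ancestor of `ȳ_{j'}`. -/
def IsTreeMapping {α : Type} (F G : Forest α) (M : Finset (ℕ × ℕ)) : Prop :=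
  (∀ p ∈ M, 1 ≤ p.1 ∧ p.1 ≤ fsize F ∧ 1 ≤ p.2 ∧ p.2 ≤ fsize G) ∧
  (∀ p ∈ M, ∀ q ∈ M,
    (p.1 = q.1 ↔ p.2 = q.2) ∧
    (p.1 ≤ q.1 ↔ p.2 ≤ q.2) ∧
    (AncestorIdx F p.1 q.1 ↔ AncestorIdx G p.2 q.2))

/-- The cost `c(M, X, Y)` of a tree mapping: the sum of the replacement costs of
the mapped pairs, the deletion costs of the unmapped nodes of `X`, and the
insertion costs of the unmapped nodes of `Y`. -/
noncomputable def mapCost {α : Type} (c : Cost α) (F G : Forest α) (M : Finset (ℕ × ℕ)) : ℝ :=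
  (∑ p ∈ M, c (labelAt F p.1) (labelAt G p.2))
  + (∑ i ∈ (Finset.Icc 1 (fsize F)).filter (fun i => ∀ p ∈ M, p.1 ≠ i), c (labelAt F i) none)
  + (∑ j ∈ (Finset.Icc 1 (fsize G)).filter (fun j => ∀ p ∈ M, p.2 ≠ j), c none (labelAt G j))

/-- A co-optimal tree mapping: a tree mapping of minimum cost. -/
def IsCoOptimal {α : Type} (c : Cost α) (F G : Forest α) (M : Finset (ℕ × ℕ)) : Prop :=
  IsTreeMapping F G M ∧
  ∀ M' : Finset (ℕ × ℕ), IsTreeMapping F G M' → mapCost c F G M ≤ mapCost c F G M'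

/-- The chain tree `ā(n+1)` over the one-letter alphabet: `aTree n` has `n+1` nodes,
so that `ā(m) = aTree (m - 1)` for `m ≥ 1`. -/
def aTree : ℕ → PTree Unit
  | 0 => PTree.node () []
  | n + 1 => PTree.node () [aTree n]

open PTree Finset

lemma size_aTree : ∀ k, (aTree k).size = k + 1
  | 0 => by simp [aTree, PTree.size, PTree.sizeL]
  | k + 1 => by
    simp [aTree, PTree.size, PTree.sizeL, size_aTree k]; omega

lemma preorder_aTree_succ (k : ℕ) :
    preorder [aTree (k+1)] = aTree (k+1) :: preorder [aTree k] := by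
  show subtreesL [aTree (k+1)] = _
  rw [show aTree (k+1) = PTree.node () [aTree k] from rfl]
  simp [subtreesL, subtreesT, preorder]

lemma preorder_aTree_zero : preorder [aTree 0] = [aTree 0] := by
  show subtreesL [aTree 0] = _
  rw [show aTree 0 = PTree.node () [] from rfl]
  simp [subtreesL, subtreesT]

lemma length_preorder_aTree : ∀ k, (preorder [aTree k]).length = k + 1
  | 0 => by rw [preorder_aTree_zero]; rfl
  | k + 1 => by rw [preorder_aTree_succ]; simp [length_preorder_aTree k]

lemma fsize_aTree (k : ℕ) : fsize [aTree k] = k + 1 := length_preorder_aTree k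

lemma getElem_preorder_aTree : ∀ k i, i ≤ k →
    (preorder [aTree k])[i]? = some (aTree (k - i))
  | 0, 0, _ => by rw [preorder_aTree_zero]; rfl
  | k+1, 0, _ => by rw [preorder_aTree_succ]; simp
  | k+1, i+1, h => by
    rw [preorder_aTree_succ, List.getElem?_cons_succ,
      getElem_preorder_aTree k i (by omega)]
    congr 2
    omega

lemma treeAt_aTree (k i : ℕ) (h1 : 1 ≤ i) (h2 : i ≤ k + 1) :
    treeAt [aTree k] i = some (aTree (k + 1 - i)) := by
  show (preorder [aTree k])[i-1]? = _
  rw [getElem_preorder_aTree k (i-1) (by omega)]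
  congr 2
  omega

lemma labelAt_aTree (k i : ℕ) (h1 : 1 ≤ i) (h2 : i ≤ k + 1) :
    labelAt [aTree k] i = some () := by
  rw [labelAt, treeAt_aTree k i h1 h2, Option.map_some]

lemma sizeAt_aTree (k i : ℕ) (h1 : 1 ≤ i) (h2 : i ≤ k + 1) :
    sizeAt [aTree k] i = k + 2 - i := by
  rw [sizeAt, treeAt_aTree k i h1 h2, Option.map_some, Option.getD_some, size_aTree]
  omega

lemma ancestorIdx_aTree (k p q : ℕ) (h1 : 1 ≤ p) (h2 : p ≤ k + 1) :
    AncestorIdx [aTree k] p q ↔ p < q ∧ q ≤ k + 1 := by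
  rw [AncestorIdx, sizeAt_aTree k p h1 h2]
  omega

lemma isTreeMapping_chain_iff (a b : ℕ) (M : Finset (ℕ × ℕ)) :
    IsTreeMapping [aTree a] [aTree b] M ↔
      (∀ p ∈ M, 1 ≤ p.1 ∧ p.1 ≤ a + 1 ∧ 1 ≤ p.2 ∧ p.2 ≤ b + 1) ∧
      (∀ p ∈ M, ∀ q ∈ M, (p.1 ≤ q.1 ↔ p.2 ≤ q.2)) := by
  rw [IsTreeMapping, fsize_aTree, fsize_aTree]
  constructor
  · rintro ⟨hb, ho⟩
    exact ⟨hb, fun p hp q hq => (ho p hp q hq).2.1⟩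
  · rintro ⟨hb, ho⟩
    refine ⟨hb, fun p hp q hq => ?_⟩
    have h1 := ho p hp q hq
    have h2 := ho q hq p hp
    obtain ⟨hp1, hp2, hp3, hp4⟩ := hb p hp
    obtain ⟨hq1, hq2, hq3, hq4⟩ := hb q hq
    refine ⟨?_, h1, ?_⟩
    · constructor
      · intro h; omega
      · intro h; omega
    · rw [ancestorIdx_aTree a p.1 q.1 hp1 hp2,
        ancestorIdx_aTree b p.2 q.2 hp3 hp4]
      omega

lemma fst_injOn {a b : ℕ} {M : Finset (ℕ × ℕ)}
    (hM : IsTreeMapping [aTree a] [aTree b] M) :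
    ∀ p ∈ M, ∀ q ∈ M, p.1 = q.1 → p = q := by
  intro p hp q hq h
  have := (hM.2 p hp q hq).1
  exact Prod.ext h (this.mp h)

lemma snd_injOn {a b : ℕ} {M : Finset (ℕ × ℕ)}
    (hM : IsTreeMapping [aTree a] [aTree b] M) :
    ∀ p ∈ M, ∀ q ∈ M, p.2 = q.2 → p = q := by
  intro p hp q hq h
  have := (hM.2 p hp q hq).1
  exact Prod.ext (this.mpr h) h

lemma card_fst_image {a b : ℕ} {M : Finset (ℕ × ℕ)}
    (hM : IsTreeMapping [aTree a] [aTree b] M) :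
    (M.image Prod.fst).card = M.card :=
  Finset.card_image_of_injOn (fun p hp q hq h => fst_injOn hM p hp q hq h)

lemma card_snd_image {a b : ℕ} {M : Finset (ℕ × ℕ)}
    (hM : IsTreeMapping [aTree a] [aTree b] M) :
    (M.image Prod.snd).card = M.card :=
  Finset.card_image_of_injOn (fun p hp q hq h => snd_injOn hM p hp q hq h)

lemma card_le_chain {a b : ℕ} {M : Finset (ℕ × ℕ)}
    (hM : IsTreeMapping [aTree a] [aTree b] M) :
    M.card ≤ a + 1 ∧ M.card ≤ b + 1 := by
  constructor
  · rw [← card_fst_image hM]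
    calc (M.image Prod.fst).card ≤ (Finset.Icc 1 (a+1)).card := by
          apply Finset.card_le_card
          intro i hi
          simp only [Finset.mem_image] at hi
          obtain ⟨p, hp, rfl⟩ := hi
          have := hM.1 p hp
          simp only [fsize_aTree] at this
          simp [Finset.mem_Icc]; omega
      _ = a + 1 := by rw [Nat.card_Icc]; omega
  · rw [← card_snd_image hM]
    calc (M.image Prod.snd).card ≤ (Finset.Icc 1 (b+1)).card := by
          apply Finset.card_le_card
          intro j hj
          simp only [Finset.mem_image] at hj
          obtain ⟨p, hp, rfl⟩ := hj
          have := hM.1 p hp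
          simp only [fsize_aTree] at this
          simp [Finset.mem_Icc]; omega
      _ = b + 1 := by rw [Nat.card_Icc]; omega

lemma unmapped_filter_fst (a b : ℕ) {M : Finset (ℕ × ℕ)}
    (hM : IsTreeMapping [aTree a] [aTree b] M) :
    (Finset.Icc 1 (a+1)).filter (fun i => ∀ p ∈ M, p.1 ≠ i) =
      Finset.Icc 1 (a+1) \ M.image Prod.fst := by
  ext i
  simp only [Finset.mem_filter, Finset.mem_sdiff, Finset.mem_image, not_exists]
  tauto

lemma unmapped_filter_snd (a b : ℕ) {M : Finset (ℕ × ℕ)}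
    (hM : IsTreeMapping [aTree a] [aTree b] M) :
    (Finset.Icc 1 (b+1)).filter (fun j => ∀ p ∈ M, p.2 ≠ j) =
      Finset.Icc 1 (b+1) \ M.image Prod.snd := by
  ext j
  simp only [Finset.mem_filter, Finset.mem_sdiff, Finset.mem_image, not_exists]
  tauto

lemma fst_image_subset {a b : ℕ} {M : Finset (ℕ × ℕ)}
    (hM : IsTreeMapping [aTree a] [aTree b] M) :
    M.image Prod.fst ⊆ Finset.Icc 1 (a+1) := by
  intro i hi
  simp only [Finset.mem_image] at hi
  obtain ⟨p, hp, rfl⟩ := hi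
  have := hM.1 p hp
  simp only [fsize_aTree] at this
  simp [Finset.mem_Icc]; omega

lemma snd_image_subset {a b : ℕ} {M : Finset (ℕ × ℕ)}
    (hM : IsTreeMapping [aTree a] [aTree b] M) :
    M.image Prod.snd ⊆ Finset.Icc 1 (b+1) := by
  intro j hj
  simp only [Finset.mem_image] at hj
  obtain ⟨p, hp, rfl⟩ := hj
  have := hM.1 p hp
  simp only [fsize_aTree] at this
  simp [Finset.mem_Icc]; omega

lemma mapCost_chain (c : Cost Unit) (hse : SelfEq c) (hs : Symm c)
    (a b : ℕ) {M : Finset (ℕ × ℕ)}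
    (hM : IsTreeMapping [aTree a] [aTree b] M) :
    mapCost c [aTree a] [aTree b] M =
      ((a + 1 - M.card : ℕ) + (b + 1 - M.card : ℕ)) * c (some ()) none := by
  rw [mapCost]
  simp only [fsize_aTree]
  have hsum1 : (∑ p ∈ M, c (labelAt [aTree a] p.1) (labelAt [aTree b] p.2)) = 0 := by
    apply Finset.sum_eq_zero
    intro p hp
    have hb := hM.1 p hp
    simp only [fsize_aTree] at hb
    rw [labelAt_aTree a p.1 hb.1 hb.2.1, labelAt_aTree b p.2 hb.2.2.1 hb.2.2.2]
    exact hse _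
  have hsum2 : (∑ i ∈ (Finset.Icc 1 (a+1)).filter (fun i => ∀ p ∈ M, p.1 ≠ i),
      c (labelAt [aTree a] i) none) = (a + 1 - M.card : ℕ) * c (some ()) none := by
    rw [Finset.sum_congr rfl (fun i hi => ?_), Finset.sum_const, nsmul_eq_mul]
    · congr 1
      rw [unmapped_filter_fst a b hM, Finset.card_sdiff_of_subset (fst_image_subset hM),
        Nat.card_Icc, card_fst_image hM]
      congr 1
    · simp only [Finset.mem_filter, Finset.mem_Icc] at hi
      rw [labelAt_aTree a i hi.1.1 hi.1.2]
  have hsum3 : (∑ j ∈ (Finset.Icc 1 (b+1)).filter (fun j => ∀ p ∈ M, p.2 ≠ j),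
      c none (labelAt [aTree b] j)) = (b + 1 - M.card : ℕ) * c (some ()) none := by
    rw [Finset.sum_congr rfl (fun j hj => ?_), Finset.sum_const, nsmul_eq_mul]
    · congr 1
      rw [unmapped_filter_snd a b hM, Finset.card_sdiff_of_subset (snd_image_subset hM),
        Nat.card_Icc, card_snd_image hM]
      congr 1
    · simp only [Finset.mem_filter, Finset.mem_Icc] at hj
      rw [labelAt_aTree b j hj.1.1 hj.1.2, hs]
  rw [hsum1, hsum2, hsum3]
  ring

lemma diag_isTreeMapping (n : ℕ) (hn : 1 ≤ n) :
    IsTreeMapping [aTree (2*n-1)] [aTree (n-1)]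
      ((Finset.Icc 1 n).image (fun i => (i, i))) := by
  rw [isTreeMapping_chain_iff]
  constructor
  · intro p hp
    simp only [Finset.mem_image, Finset.mem_Icc] at hp
    obtain ⟨i, hi, rfl⟩ := hp
    simp only
    omega
  · intro p hp q hq
    simp only [Finset.mem_image, Finset.mem_Icc] at hp hq
    obtain ⟨i, hi, rfl⟩ := hp
    obtain ⟨j, hj, rfl⟩ := hq
    simp

lemma diag_card (n : ℕ) :
    ((Finset.Icc 1 n).image (fun i => (i, i))).card = n := by
  rw [Finset.card_image_of_injective _ (fun x y h => by simpa using (Prod.mk.injEq _ _ _ _ ▸ h).1),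
    Nat.card_Icc]
  omega

lemma coopt_iff (c : Cost Unit) (hse : SelfEq c) (hd : Discernible c) (hs : Symm c)
    (n : ℕ) (hn : 1 ≤ n) (M : Finset (ℕ × ℕ)) :
    IsCoOptimal c [aTree (2*n-1)] [aTree (n-1)] M ↔
      IsTreeMapping [aTree (2*n-1)] [aTree (n-1)] M ∧ M.card = n := by
  have hd0 : 0 < c (some ()) none := hd _ _ (by simp)
  constructor
  · rintro ⟨hM, hmin⟩
    refine ⟨hM, ?_⟩
    have hle := card_le_chain hM
    have h0 := hmin _ (diag_isTreeMapping n hn)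
    rw [mapCost_chain c hse hs _ _ hM,
      mapCost_chain c hse hs _ _ (diag_isTreeMapping n hn), diag_card] at h0
    have hkey : ((2*n-1) + 1 - M.card : ℕ) + ((n-1) + 1 - M.card : ℕ) ≤
        ((2*n-1) + 1 - n : ℕ) + ((n-1) + 1 - n : ℕ) := by
      have := mul_le_mul_of_nonneg_right (le_refl (1:ℝ)) (le_of_lt hd0)
      by_contra hcon
      push_neg at hcon
      have hlt : (((2*n-1) + 1 - n : ℕ) + ((n-1) + 1 - n : ℕ) : ℝ) <
          (((2*n-1) + 1 - M.card : ℕ) + ((n-1) + 1 - M.card : ℕ) : ℝ) := by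
        exact_mod_cast hcon
      nlinarith [hd0, h0]
    omega
  · rintro ⟨hM, hcard⟩
    refine ⟨hM, fun M' hM' => ?_⟩
    rw [mapCost_chain c hse hs _ _ hM, mapCost_chain c hse hs _ _ hM', hcard]
    have hle' := card_le_chain hM'
    apply mul_le_mul_of_nonneg_right _ (le_of_lt hd0)
    have : ((2*n-1) + 1 - n : ℕ) + ((n-1) + 1 - n : ℕ) ≤
        ((2*n-1) + 1 - M'.card : ℕ) + ((n-1) + 1 - M'.card : ℕ) := by omega
    exact_mod_cast this

/-- The 1-based rank of `i` in the finite set `S`. -/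
def rnk (S : Finset ℕ) (i : ℕ) : ℕ := (S.filter (· < i)).card + 1

/-- The canonical tree mapping determined by a set of first coordinates. -/
def Phi (S : Finset ℕ) : Finset (ℕ × ℕ) := S.image (fun i => (i, rnk S i))

lemma rnk_lt_rnk (S : Finset ℕ) {i j : ℕ} (hi : i ∈ S) (hij : i < j) :
    rnk S i < rnk S j := by
  have hss : S.filter (· < i) ⊂ S.filter (· < j) := by
    refine ⟨Finset.filter_subset_filter _ (le_refl S) |>.trans ?_, ?_⟩
    · intro x hx
      simp only [Finset.mem_filter] at hx ⊢
      exact ⟨hx.1, lt_of_lt_of_le hx.2 (le_of_lt hij)⟩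
    · intro hsub
      have : i ∈ S.filter (· < j) := Finset.mem_filter.mpr ⟨hi, hij⟩
      have := hsub this
      simp only [Finset.mem_filter] at this
      omega
  have := Finset.card_lt_card hss
  rw [rnk, rnk]
  omega

lemma rnk_le_iff (S : Finset ℕ) {i j : ℕ} (hi : i ∈ S) (hj : j ∈ S) :
    i ≤ j ↔ rnk S i ≤ rnk S j := by
  constructor
  · intro h
    rcases eq_or_lt_of_le h with rfl | h
    · exact le_refl _
    · exact le_of_lt (rnk_lt_rnk S hi h)
  · intro h
    by_contra hcon
    push_neg at hcon
    exact absurd h (not_le.mpr (rnk_lt_rnk S hj hcon))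

lemma rnk_le_card (S : Finset ℕ) {i : ℕ} (hi : i ∈ S) : rnk S i ≤ S.card := by
  have hss : S.filter (· < i) ⊂ S := by
    refine ⟨Finset.filter_subset _ _, fun hsub => ?_⟩
    have := hsub hi
    simp only [Finset.mem_filter] at this
    omega
  have := Finset.card_lt_card hss
  rw [rnk]
  omega

lemma Phi_image_fst (S : Finset ℕ) : (Phi S).image Prod.fst = S := by
  rw [Phi, Finset.image_image]
  exact Finset.image_id

lemma Phi_card (S : Finset ℕ) : (Phi S).card = S.card := by
  apply Finset.card_image_of_injOn
  intro x _ y _ h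
  exact (Prod.mk.injEq _ _ _ _ ▸ h).1

lemma Phi_isTreeMapping (n : ℕ) (hn : 1 ≤ n) (S : Finset ℕ)
    (hsub : S ⊆ Finset.Icc 1 (2*n)) (hcard : S.card = n) :
    IsTreeMapping [aTree (2*n-1)] [aTree (n-1)] (Phi S) := by
  rw [isTreeMapping_chain_iff]
  constructor
  · intro p hp
    simp only [Phi, Finset.mem_image] at hp
    obtain ⟨i, hi, rfl⟩ := hp
    have hmem := hsub hi
    simp only [Finset.mem_Icc] at hmem
    have h1 := rnk_le_card S hi
    rw [hcard] at h1
    have : 1 ≤ rnk S i := Nat.le_add_left 1 _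
    simp only
    omega
  · intro p hp q hq
    simp only [Phi, Finset.mem_image] at hp hq
    obtain ⟨i, hi, rfl⟩ := hp
    obtain ⟨j, hj, rfl⟩ := hq
    exact rnk_le_iff S hi hj

lemma snd_image_eq (n : ℕ) (hn : 1 ≤ n) {M : Finset (ℕ × ℕ)}
    (hM : IsTreeMapping [aTree (2*n-1)] [aTree (n-1)] M) (hcard : M.card = n) :
    M.image Prod.snd = Finset.Icc 1 n := by
  apply Finset.eq_of_subset_of_card_le
  · have := snd_image_subset hM
    rwa [show (n-1)+1 = n by omega] at this
  · rw [Nat.card_Icc, card_snd_image hM, hcard]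
    omega

lemma rnk_eq_snd (n : ℕ) (hn : 1 ≤ n) {M : Finset (ℕ × ℕ)}
    (hM : IsTreeMapping [aTree (2*n-1)] [aTree (n-1)] M) (hcard : M.card = n)
    {i j : ℕ} (hij : (i, j) ∈ M) :
    rnk (M.image Prod.fst) i = j := by
  have hb := hM.1 (i, j) hij
  simp only [fsize_aTree] at hb
  -- the filter on the first coordinate equals the filter on the second
  have hfe : M.filter (fun p => p.1 < i) = M.filter (fun p => p.2 < j) := by
    apply Finset.filter_congr
    intro p hp
    have h1 : i ≤ p.1 ↔ j ≤ p.2 := (hM.2 (i, j) hij p hp).2.1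
    omega
  have h2 : ((M.image Prod.fst).filter (· < i)).card =
      (M.filter (fun p => p.1 < i)).card := by
    rw [Finset.filter_image]
    exact Finset.card_image_of_injOn (fun p hp q hq h =>
      fst_injOn hM p (Finset.filter_subset _ _ hp) q (Finset.filter_subset _ _ hq) h)
  have h3 : ((M.image Prod.snd).filter (· < j)).card =
      (M.filter (fun p => p.2 < j)).card := by
    rw [Finset.filter_image]
    exact Finset.card_image_of_injOn (fun p hp q hq h =>
      snd_injOn hM p (Finset.filter_subset _ _ hp) q (Finset.filter_subset _ _ hq) h)
  have h4 : (M.image Prod.snd).filter (· < j) = Finset.Icc 1 (j - 1) := by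
    rw [snd_image_eq n hn hM hcard]
    ext x
    simp only [Finset.mem_filter, Finset.mem_Icc]
    constructor
    · intro h; omega
    · intro h
      refine ⟨⟨h.1, ?_⟩, ?_⟩ <;> omega
  have h5 : (Finset.Icc 1 (j-1)).card = j - 1 := by rw [Nat.card_Icc]; omega
  have hfc : (M.filter (fun p => p.1 < i)).card = (M.filter (fun p => p.2 < j)).card :=
    congrArg Finset.card hfe
  rw [h4, h5] at h3
  rw [rnk]
  omega

lemma M_eq_Phi (n : ℕ) (hn : 1 ≤ n) {M : Finset (ℕ × ℕ)}
    (hM : IsTreeMapping [aTree (2*n-1)] [aTree (n-1)] M) (hcard : M.card = n) :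
    M = Phi (M.image Prod.fst) := by
  apply Finset.eq_of_subset_of_card_le
  · intro p hp
    have hp' : (p.1, p.2) ∈ M := by rwa [Prod.mk.eta]
    have h := rnk_eq_snd n hn hM hcard hp'
    refine Finset.mem_image.mpr ⟨p.1, Finset.mem_image_of_mem _ hp, ?_⟩
    rw [h, Prod.mk.eta]
  · rw [Phi_card, card_fst_image hM]

/-- Over the one-letter alphabet, for any metric cost function and any
even `m > 0`, there are exactly `m! / ((m/2)!)² = C(m, m/2)` co-optimal tree mappings
between the chain trees `ā(m)` and `ā(m/2)`. -/
theorem chain_coopt_mapping_count (c : Cost Unit) (hnn : Nonneg c) (hse : SelfEq c)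
    (hd : Discernible c) (hs : Symm c) (htr : Triangle c)
    (m : ℕ) (hm : 0 < m) (he : Even m) :
    {M : Finset (ℕ × ℕ) |
        IsCoOptimal c [aTree (m - 1)] [aTree (m / 2 - 1)] M}.ncard =
      Nat.factorial m / (Nat.factorial (m / 2)) ^ 2 := by
  obtain ⟨n, hn⟩ := he
  have hn1 : 1 ≤ n := by omega
  have hm1 : m - 1 = 2 * n - 1 := by omega
  have hm2 : m / 2 - 1 = n - 1 := by omega
  have hm3 : m / 2 = n := by omega
  rw [hm1, hm2, hm3]
  have hset : {M : Finset (ℕ × ℕ) |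
      IsCoOptimal c [aTree (2*n - 1)] [aTree (n - 1)] M} =
      ↑((Finset.powersetCard n (Finset.Icc 1 (2*n))).image Phi) := by
    ext M
    simp only [Set.mem_setOf_eq, Finset.coe_image, Set.mem_image, Finset.mem_coe,
      Finset.mem_powersetCard]
    rw [coopt_iff c hse hd hs n hn1]
    constructor
    · rintro ⟨hM, hcard⟩
      refine ⟨M.image Prod.fst, ⟨?_, ?_⟩, (M_eq_Phi n hn1 hM hcard).symm⟩
      · have := fst_image_subset hM
        rwa [show 2*n-1+1 = 2*n by omega] at this
      · rw [card_fst_image hM, hcard]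
    · rintro ⟨S, ⟨hsub, hcard⟩, rfl⟩
      refine ⟨Phi_isTreeMapping n hn1 S hsub hcard, ?_⟩
      rw [Phi_card, hcard]
  rw [hset, Set.ncard_coe_finset]
  have hinj : Set.InjOn Phi ↑(Finset.powersetCard n (Finset.Icc 1 (2*n))) := by
    intro S _ S' _ h
    rw [← Phi_image_fst S, ← Phi_image_fst S', h]
  rw [Finset.card_image_of_injOn hinj, Finset.card_powersetCard, Nat.card_Icc,
    show 2*n+1-1 = 2*n by omega]
  rw [show m = 2*n by omega, Nat.choose_eq_factorial_div_factorial (by omega : n ≤ 2*n),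
    show 2*n - n = n by omega, sq]

end TED
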